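/- For ν ≥ ν₀ (where ν₀ is the positive root of √π Γ(ν+3/2) = 8 Γ(ν+1)), the coefficients a_n of z·B_ν(z) satisfy a_1 ≥ 8 a_2 and (n−1)a_n ≥ (n+1)a_{n+1} for all n ≥ 2. -/

import Mathlib

open Real

/-- Log-convexity midpoint inequality: `Γ(x+1/2)² ≤ x·Γ(x)²` for `x > 0`. -/
lemma gamma_half_sq {x : ℝ} (hx : 0 < x) :
    Real.Gamma (x + 1/2) ^ 2 ≤ x * Real.Gamma x ^ 2 := by
  have hx1 : (0:ℝ) < x + 1 := by linarith
  have hx12 : (0:ℝ) < x + 1/2 := by linarith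
  have p1 : 0 < Real.Gamma x := Real.Gamma_pos_of_pos hx
  have p2 : 0 < Real.Gamma (x + 1/2) := Real.Gamma_pos_of_pos hx12
  have p3 : 0 < Real.Gamma (x + 1) := Real.Gamma_pos_of_pos hx1
  have h := Real.convexOn_log_Gamma.2 (Set.mem_Ioi.mpr hx) (Set.mem_Ioi.mpr hx1)
      (by norm_num : (0:ℝ) ≤ 1/2) (by norm_num : (0:ℝ) ≤ 1/2) (by norm_num)
  simp only [smul_eq_mul, Function.comp_apply] at h
  rw [show (1/2:ℝ) * x + (1/2) * (x+1) = x + 1/2 by ring] at h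
  have h2 : Real.Gamma (x + 1/2) ≤
      Real.exp (1/2 * Real.log (Real.Gamma x) + 1/2 * Real.log (Real.Gamma (x+1))) := by
    calc Real.Gamma (x + 1/2) = Real.exp (Real.log (Real.Gamma (x + 1/2))) :=
          (Real.exp_log p2).symm
      _ ≤ _ := Real.exp_le_exp.mpr h
  have h3 : Real.Gamma (x + 1/2) ^ 2 ≤
      (Real.exp (1/2 * Real.log (Real.Gamma x) + 1/2 * Real.log (Real.Gamma (x+1)))) ^ 2 :=
    pow_le_pow_left₀ p2.le h2 2
  have h4 : (Real.exp (1/2 * Real.log (Real.Gamma x) + 1/2 * Real.log (Real.Gamma (x+1)))) ^ 2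
      = Real.Gamma x * Real.Gamma (x+1) := by
    rw [sq, ← Real.exp_add, show (1/2 * Real.log (Real.Gamma x) + 1/2 * Real.log (Real.Gamma (x+1)))
      + (1/2 * Real.log (Real.Gamma x) + 1/2 * Real.log (Real.Gamma (x+1)))
      = Real.log (Real.Gamma x) + Real.log (Real.Gamma (x+1)) by ring,
      Real.exp_add, Real.exp_log p1, Real.exp_log p3]
  rw [h4, Real.Gamma_add_one hx.ne'] at h3
  nlinarith [h3]

/-- For `0 < a ≤ b`, `Γ(a+1/2)·Γ(b) ≤ Γ(a)·Γ(b+1/2)`. -/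
lemma gamma_shift {a b : ℝ} (ha : 0 < a) (hab : a ≤ b) :
    Real.Gamma (a + 1/2) * Real.Gamma b ≤ Real.Gamma a * Real.Gamma (b + 1/2) := by
  have hb : 0 < b := lt_of_lt_of_le ha hab
  have hb12 : (0:ℝ) < b + 1/2 := by linarith
  have ha12 : (0:ℝ) < a + 1/2 := by linarith
  set T : ℝ := b + 1/2 - a with hT
  have hTpos : (0:ℝ) < T := by simp [hT]; linarith
  set lam : ℝ := (1/2) / T with hlam
  have hlam0 : 0 ≤ lam := by positivity
  have hlamT : lam * T = 1/2 := by rw [hlam, div_mul_cancel₀ _ hTpos.ne']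
  have hlam1 : lam ≤ 1 := by
    rw [hlam, div_le_one hTpos]; linarith
  set mu : ℝ := 1 - lam with hmu
  have hmu0 : 0 ≤ mu := by simp [hmu]; linarith
  have h1 := Real.convexOn_log_Gamma.2 (Set.mem_Ioi.mpr ha) (Set.mem_Ioi.mpr hb12)
      hmu0 hlam0 (by rw [hmu]; ring)
  have h2 := Real.convexOn_log_Gamma.2 (Set.mem_Ioi.mpr ha) (Set.mem_Ioi.mpr hb12)
      hlam0 hmu0 (by rw [hmu]; ring)
  simp only [smul_eq_mul, Function.comp_apply] at h1 h2
  have e1 : mu * a + lam * (b + 1/2) = a + 1/2 := by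
    have : mu * a + lam * (b + 1/2) = a + lam * T := by rw [hmu, hT]; ring
    rw [this, hlamT]
  have e2 : lam * a + mu * (b + 1/2) = b := by
    have : lam * a + mu * (b + 1/2) = b + 1/2 - lam * T := by rw [hmu, hT]; ring
    rw [this, hlamT]; ring
  rw [e1] at h1
  rw [e2] at h2
  have hsum : Real.log (Real.Gamma (a + 1/2)) + Real.log (Real.Gamma b)
      ≤ Real.log (Real.Gamma a) + Real.log (Real.Gamma (b + 1/2)) := by
    have : mu * Real.log (Real.Gamma a) + lam * Real.log (Real.Gamma (b+1/2))
        + (lam * Real.log (Real.Gamma a) + mu * Real.log (Real.Gamma (b+1/2)))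
        = Real.log (Real.Gamma a) + Real.log (Real.Gamma (b + 1/2)) := by
      rw [hmu]; ring
    linarith [add_le_add h1 h2]
  have key := Real.exp_le_exp.mpr hsum
  rwa [Real.exp_add, Real.exp_add, Real.exp_log (Real.Gamma_pos_of_pos ha12),
    Real.exp_log (Real.Gamma_pos_of_pos hb), Real.exp_log (Real.Gamma_pos_of_pos ha),
    Real.exp_log (Real.Gamma_pos_of_pos hb12)] at key


/-- Key coefficient inequality. -/
lemma key2_lemma (N ν : ℝ) (hN0 : 0 ≤ N) (hν54 : 5/4 ≤ ν) :
    (N + 3) * Real.Gamma ((N + 3) / 2) * Real.Gamma ((N + 3) / 2 + ν)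
      ≤ (N + 1) * (N + 2) * Real.Gamma ((N + 2) / 2) * Real.Gamma ((N + 4) / 2 + ν) := by
  have hxpos : (0:ℝ) < (N + 2) / 2 := by linarith
  have hypos : (0:ℝ) < (N + 2) / 2 + ν := by linarith
  have h1 : Real.Gamma ((N + 3) / 2) ^ 2 ≤ (N + 2) / 2 * Real.Gamma ((N + 2) / 2) ^ 2 := by
    have := gamma_half_sq hxpos
    rwa [show (N + 2) / 2 + 1/2 = (N + 3) / 2 by ring] at this
  have h2 : Real.Gamma ((N + 3) / 2 + ν) ^ 2
      ≤ ((N + 2) / 2 + ν) * Real.Gamma ((N + 2) / 2 + ν) ^ 2 := by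
    have := gamma_half_sq hypos
    rwa [show (N + 2) / 2 + ν + 1/2 = (N + 3) / 2 + ν by ring] at this
  have hGy1 : Real.Gamma ((N + 4) / 2 + ν) = ((N + 2) / 2 + ν) * Real.Gamma ((N + 2) / 2 + ν) := by
    rw [show (N + 4) / 2 + ν = ((N + 2) / 2 + ν) + 1 by ring]
    exact Real.Gamma_add_one hypos.ne'
  have h2' : ((N + 2) / 2 + ν) * Real.Gamma ((N + 3) / 2 + ν) ^ 2
      ≤ Real.Gamma ((N + 4) / 2 + ν) ^ 2 := by
    have he : Real.Gamma ((N + 4) / 2 + ν) ^ 2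
        = ((N + 2) / 2 + ν) ^ 2 * Real.Gamma ((N + 2) / 2 + ν) ^ 2 := by rw [hGy1]; ring
    rw [he]
    nlinarith [h2, hypos]
  have h5 : 2 * (N + 3) ^ 2 ≤ (N + 1) ^ 2 * (N + 2) * (2 * N + 9) := by
    nlinarith [mul_nonneg (mul_nonneg hN0 hN0) (mul_nonneg hN0 hN0),
      mul_nonneg (mul_nonneg hN0 hN0) hN0, mul_nonneg hN0 hN0, hN0]
  have hpoly : (N + 3) ^ 2 * ((N + 2) / 2)
      ≤ (N + 1) ^ 2 * (N + 2) ^ 2 * ((N + 2) / 2 + ν) := by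
    nlinarith [mul_le_mul_of_nonneg_left h5 (by positivity : (0:ℝ) ≤ (N + 2) / 4),
      mul_nonneg (mul_nonneg (sq_nonneg (N+1)) (sq_nonneg (N+2)))
        (by linarith : (0:ℝ) ≤ ν - 5/4)]
  have hΓx : 0 < Real.Gamma ((N + 2) / 2) := Real.Gamma_pos_of_pos hxpos
  have hB : 0 < Real.Gamma ((N + 3) / 2) := Real.Gamma_pos_of_pos (by linarith)
  have hG1 : 0 < Real.Gamma ((N + 3) / 2 + ν) := Real.Gamma_pos_of_pos (by linarith)
  have hG2 : 0 < Real.Gamma ((N + 4) / 2 + ν) := Real.Gamma_pos_of_pos (by linarith)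
  have hLHS0 : 0 ≤ (N + 3) * Real.Gamma ((N + 3) / 2) * Real.Gamma ((N + 3) / 2 + ν) := by
    positivity
  have hsq : ((N + 3) * Real.Gamma ((N + 3) / 2) * Real.Gamma ((N + 3) / 2 + ν)) ^ 2
      ≤ ((N + 1) * (N + 2) * Real.Gamma ((N + 2) / 2) * Real.Gamma ((N + 4) / 2 + ν)) ^ 2 := by
    have s1 := mul_le_mul_of_nonneg_left h1
      (by positivity : (0:ℝ) ≤ (N + 3) ^ 2 * Real.Gamma ((N + 3) / 2 + ν) ^ 2)
    have s2 := mul_le_mul_of_nonneg_right hpoly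
      (by positivity : (0:ℝ) ≤ Real.Gamma ((N + 2) / 2) ^ 2 * Real.Gamma ((N + 3) / 2 + ν) ^ 2)
    have s3 := mul_le_mul_of_nonneg_left h2'
      (by positivity : (0:ℝ) ≤ (N + 1) ^ 2 * (N + 2) ^ 2 * Real.Gamma ((N + 2) / 2) ^ 2)
    ring_nf at s1 s2 s3 ⊢
    linarith [s1, s2, s3]
  have hfin := Real.sqrt_le_sqrt hsq
  rwa [Real.sqrt_sq hLHS0, Real.sqrt_sq (by positivity)] at hfin

theorem coeff_conditions_above_nu_zero (ν₀ : ℝ) (hν₀ : 0 < ν₀)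
    (hroot : Real.sqrt Real.pi * Real.Gamma (ν₀ + 3/2) = 8 * Real.Gamma (ν₀ + 1))
    (ν : ℝ) (hν : ν₀ ≤ ν) (a : ℕ → ℝ) (ha1 : a 1 = 1)
    (ha : ∀ n : ℕ, 2 ≤ n → a n = Real.Gamma (ν + 1) * Real.Gamma ((n : ℝ) / 2) /
      (Real.sqrt Real.pi * ((n - 1).factorial : ℝ) * Real.Gamma (((n : ℝ) + 1) / 2 + ν))) :
    a 1 ≥ 8 * a 2 ∧
      ∀ n : ℕ, 2 ≤ n → ((n : ℝ) - 1) * a n ≥ ((n : ℝ) + 1) * a (n + 1) := by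
  have hπ : (0:ℝ) < Real.pi := Real.pi_pos
  have hPpos : (0:ℝ) < Real.sqrt Real.pi := Real.sqrt_pos.mpr hπ
  have hPsq : Real.sqrt Real.pi ^ 2 = Real.pi := Real.sq_sqrt hπ.le
  have hΓ0pos : 0 < Real.Gamma (ν₀ + 1) := Real.Gamma_pos_of_pos (by linarith)
  -- Lower bound on ν₀ : ν₀ ≥ 15
  have hν15 : (15:ℝ) ≤ ν₀ := by
    have h1 : Real.Gamma (ν₀ + 1 + 1/2) ^ 2 ≤ (ν₀ + 1) * Real.Gamma (ν₀ + 1) ^ 2 :=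
      gamma_half_sq (by linarith)
    rw [show ν₀ + 1 + 1/2 = ν₀ + 3/2 by ring] at h1
    have h2 : Real.pi * Real.Gamma (ν₀ + 3/2) ^ 2 = 64 * Real.Gamma (ν₀ + 1) ^ 2 := by
      have := congrArg (· ^ 2) hroot
      simp only [mul_pow] at this
      rw [hPsq] at this
      linarith [this]
    have h3 : (64:ℝ) ≤ Real.pi * (ν₀ + 1) := by
      have hΓsq : 0 < Real.Gamma (ν₀ + 1) ^ 2 := by positivity
      nlinarith [mul_le_mul_of_nonneg_left h1 hπ.le]
    nlinarith [Real.pi_le_four]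
  have hν54 : (5/4:ℝ) ≤ ν := by linarith
  -- key inequality for the first part
  have key1 : 8 * Real.Gamma (ν + 1) ≤ Real.sqrt Real.pi * Real.Gamma (ν + 3/2) := by
    have lem2 : Real.Gamma (ν₀ + 1 + 1/2) * Real.Gamma (ν + 1)
        ≤ Real.Gamma (ν₀ + 1) * Real.Gamma (ν + 1 + 1/2) :=
      gamma_shift (by linarith) (by linarith)
    rw [show ν₀ + 1 + 1/2 = ν₀ + 3/2 by ring, show ν + 1 + 1/2 = ν + 3/2 by ring] at lem2
    have h3 := mul_le_mul_of_nonneg_left lem2 hPpos.le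
    have e1 : Real.sqrt Real.pi * (Real.Gamma (ν₀ + 3/2) * Real.Gamma (ν + 1))
        = Real.Gamma (ν₀ + 1) * (8 * Real.Gamma (ν + 1)) := by
      rw [← mul_assoc, hroot]; ring
    have e2 : Real.sqrt Real.pi * (Real.Gamma (ν₀ + 1) * Real.Gamma (ν + 3/2))
        = Real.Gamma (ν₀ + 1) * (Real.sqrt Real.pi * Real.Gamma (ν + 3/2)) := by ring
    rw [e1, e2] at h3
    have h4 := h3
    exact le_of_mul_le_mul_left h4 hΓ0pos
  constructor
  · -- a 1 ≥ 8 * a 2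
    have ha2 : a 2 = Real.Gamma (ν + 1) / (Real.sqrt Real.pi * Real.Gamma (ν + 3/2)) := by
      rw [ha 2 le_rfl]
      norm_num [Real.Gamma_one]
      rw [show (3/2:ℝ) + ν = ν + 3/2 by ring]
    rw [ha1, ha2, ge_iff_le, ← mul_div_assoc, div_le_one (by positivity)]
    exact key1
  · intro n hn
    obtain ⟨m, rfl⟩ : ∃ m, n = m + 2 := ⟨n - 2, by omega⟩
    have hN0 : (0:ℝ) ≤ (m:ℝ) := Nat.cast_nonneg m
    have e1 : m + 2 - 1 = m + 1 := by omega
    have e2 : m + 3 - 1 = m + 2 := by omega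
    have hfs : (m+2).factorial = (m+2) * (m+1).factorial := rfl
    have hgc : m + 2 + 1 = m + 3 := by omega
    rw [hgc, ha (m+2) (by omega), ha (m+3) (by omega), e1, e2, hfs]
    push_cast
    rw [show ((m:ℝ) + 2 + 1) / 2 + ν = ((m:ℝ) + 3) / 2 + ν by ring,
      show ((m:ℝ) + 3 + 1) / 2 + ν = ((m:ℝ) + 4) / 2 + ν by ring]
    have key2 := key2_lemma (m:ℝ) ν hN0 hν54
    have hF : (0:ℝ) < ((m+1).factorial : ℝ) := by positivity
    have hΓν1 : 0 < Real.Gamma (ν + 1) := Real.Gamma_pos_of_pos (by linarith)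
    have hG1 : 0 < Real.Gamma (((m:ℝ) + 3) / 2 + ν) := Real.Gamma_pos_of_pos (by linarith)
    have hG2 : 0 < Real.Gamma (((m:ℝ) + 4) / 2 + ν) := Real.Gamma_pos_of_pos (by linarith)
    rw [ge_iff_le, ← mul_div_assoc, ← mul_div_assoc,
      div_le_div_iff₀ (by positivity) (by positivity)]
    have hfin := mul_le_mul_of_nonneg_left key2
      (by positivity : (0:ℝ) ≤ Real.Gamma (ν + 1) * Real.sqrt Real.pi * ((m+1).factorial : ℝ))
    ring_nf at hfin ⊢
    linarith [hfin]
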